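/- A category with strong and weak equivalences (C, S, W) is a left Cartan-Eilenberg category if and only if the functor j : C_cof[S⁻¹, C] → C[W⁻¹] (the restriction of γ' : C[S⁻¹] → C[W⁻¹] to the full subcategory of cofibrant objects) is an equivalence of categories. -/

import Mathlib

open CategoryTheory

universe v u

variable {C : Type u} [Category.{v} C]

/-- `(C, S, W)` is a category with strong and weak equivalences. -/
structure StrongWeak (S W : MorphismProperty C) : Prop where
  comp_S : ∀ ⦃X Y Z : C⦄ (f : X ⟶ Y) (g : Y ⟶ Z), S f → S g → S (f ≫ g)
  comp_W : ∀ ⦃X Y Z : C⦄ (f : X ⟶ Y) (g : Y ⟶ Z), W f → W g → W (f ≫ g)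
  iso_S : ∀ ⦃X Y : C⦄ (f : X ⟶ Y), IsIso f → S f
  iso_W : ∀ ⦃X Y : C⦄ (f : X ⟶ Y), IsIso f → W f
  le_sat : ∀ ⦃X Y : C⦄ (f : X ⟶ Y), S f → IsIso (W.Q.map f)

/-- An object `M` is `(S, W)`-cofibrant. -/
def Cofibrant (S W : MorphismProperty C) (M : C) : Prop :=
  ∀ ⦃Y X : C⦄ (w : Y ⟶ X), W w →
    Function.Bijective (fun g : S.Q.obj M ⟶ S.Q.obj Y => g ≫ S.Q.map w)

/-- The canonical functor `γ' : C[S⁻¹] ⥤ C[W⁻¹]`. -/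
noncomputable def gammaPrime (S W : MorphismProperty C)
    (h : ∀ ⦃X Y : C⦄ (f : X ⟶ Y), S f → IsIso (W.Q.map f)) :
    S.Localization ⥤ W.Localization :=
  Localization.Construction.lift W.Q (fun _ _ f hf => h f hf)

/-- `(C, S, W)` is a left Cartan-Eilenberg category: every object has a cofibrant left
model, i.e. a cofibrant object `M` and a morphism `ε : M ⟶ X` in `C[S⁻¹]` which becomes
an isomorphism in `C[W⁻¹]`. -/
def LeftCE (S W : MorphismProperty C)
    (h : ∀ ⦃X Y : C⦄ (f : X ⟶ Y), S f → IsIso (W.Q.map f)) : Prop :=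
  ∀ X : C, ∃ (M : C) (ε : S.Q.obj M ⟶ S.Q.obj X),
    Cofibrant S W M ∧ IsIso ((gammaPrime S W h).map ε)

/-- The relative localisation `C_cof[S⁻¹, C]`: the full subcategory of `C[S⁻¹]` whose
objects are the cofibrant objects of `C`. -/
@[nolint unusedArguments]
noncomputable def relLocCof (S W : MorphismProperty C) :=
  InducedCategory S.Localization
    (fun M : {M : C // Cofibrant S W M} => S.Q.obj M.1)

noncomputable instance (S W : MorphismProperty C) : Category (relLocCof S W) :=
  InducedCategory.instCategory

/-- The functor `j : C_cof[S⁻¹, C] ⥤ C[W⁻¹]`. -/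
noncomputable def jFunctor (S W : MorphismProperty C)
    (h : ∀ ⦃X Y : C⦄ (f : X ⟶ Y), S f → IsIso (W.Q.map f)) :
    relLocCof S W ⥤ W.Localization :=
  inducedFunctor _ ⋙ gammaPrime S W h

section Aux
variable (S W : MorphismProperty C)
variable (h : ∀ ⦃X Y : C⦄ (f : X ⟶ Y), S f → IsIso (W.Q.map f))

/-- `Hom(S.Q M, S.Q -) : C ⥤ Type`. -/
noncomputable def cofF (S : MorphismProperty C) (M : C) : C ⥤ Type (max u v) :=
  S.Q ⋙ coyoneda.obj (Opposite.op (S.Q.obj M))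

lemma cofF_inverts {M : C} (hM : Cofibrant S W M) : W.IsInvertedBy (cofF S M) := by
  intro Y X w hw
  rw [isIso_iff_bijective]
  exact hM w hw

/-- The lift of `cofF` to `W.Localization`. -/
noncomputable def cofFL {M : C} (hM : Cofibrant S W M) : W.Localization ⥤ Type (max u v) :=
  Localization.Construction.lift (cofF S M) (cofF_inverts S W hM)

lemma star {M : C} (hM : Cofibrant S W M) :
    ∀ ⦃A B : W.Localization⦄ (β : A ⟶ B) (x : S.Q.obj M ⟶ S.Q.obj A.as.obj),
      (gammaPrime S W h).map
        (((cofFL S W hM).map β :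
          (S.Q.obj M ⟶ S.Q.obj A.as.obj) → (S.Q.obj M ⟶ S.Q.obj B.as.obj)) x) =
      (gammaPrime S W h).map x ≫ (β : W.Q.obj A.as.obj ⟶ W.Q.obj B.as.obj) := by
  let P : MorphismProperty W.Localization := fun A B β =>
    ∀ (x : S.Q.obj M ⟶ S.Q.obj A.as.obj),
      (gammaPrime S W h).map
        (((cofFL S W hM).map β :
          (S.Q.obj M ⟶ S.Q.obj A.as.obj) → (S.Q.obj M ⟶ S.Q.obj B.as.obj)) x) =
      (gammaPrime S W h).map x ≫ (β : W.Q.obj A.as.obj ⟶ W.Q.obj B.as.obj)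
  haveI : P.IsStableUnderComposition := ⟨by
    intro A B Z f g hf hg x
    show (gammaPrime S W h).map ((cofFL S W hM).map (f ≫ g) x) = _
    erw [Functor.map_comp_apply]
    exact (hg _).trans (by rw [hf]; exact Category.assoc _ _ _)⟩
  have hP : P = ⊤ := by
    apply Localization.Construction.morphismProperty_eq_top P
    · intro X Y f x
      show (gammaPrime S W h).map (x ≫ S.Q.map f) = _
      exact (gammaPrime S W h).map_comp x (S.Q.map f)
    · intro X Y w hw x
      set y : S.Q.obj M ⟶ S.Q.obj X :=
        ((cofFL S W hM).map (Localization.Construction.wInv w hw) :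
          (S.Q.obj M ⟶ S.Q.obj Y) → (S.Q.obj M ⟶ S.Q.obj X)) x with hy
      have h1 : y ≫ S.Q.map w = x := by
        show ((cofFL S W hM).map (W.Q.map w) :
          (S.Q.obj M ⟶ S.Q.obj X) → (S.Q.obj M ⟶ S.Q.obj Y)) y = x
        rw [hy]
        erw [← Functor.map_comp_apply]
        erw [show Localization.Construction.wInv w hw ≫ W.Q.map w =
          𝟙 _ from (Localization.Construction.wIso w hw).inv_hom_id]
        erw [Functor.map_id_apply]
      show (gammaPrime S W h).map y = _
      conv_rhs => rw [← h1]
      erw [Functor.map_comp, Category.assoc]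
      show _ = (gammaPrime S W h).map y ≫ (Localization.Construction.wIso w hw).hom ≫
        (Localization.Construction.wIso w hw).inv
      erw [Iso.hom_inv_id, Category.comp_id]
  intro A B β x
  have hβ : P β := by rw [hP]; exact MorphismProperty.top_apply β
  exact hβ x
lemma starstar {M : C} (hM : Cofibrant S W M) :
    ∀ ⦃A B : S.Localization⦄ (g : A ⟶ B) (x : S.Q.obj M ⟶ A),
      ((cofFL S W hM).map ((gammaPrime S W h).map g) :
        (S.Q.obj M ⟶ A) → (S.Q.obj M ⟶ B)) x = x ≫ g := by
  let P : MorphismProperty S.Localization := fun A B g =>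
    ∀ (x : S.Q.obj M ⟶ A),
      ((cofFL S W hM).map ((gammaPrime S W h).map g) :
        (S.Q.obj M ⟶ A) → (S.Q.obj M ⟶ B)) x = x ≫ g
  haveI : P.IsStableUnderComposition := ⟨by
    intro A B Z f g hf hg x
    rw [Functor.map_comp]
    erw [Functor.map_comp_apply]
    exact (by rw [hf, hg, Category.assoc] :
      ((cofFL S W hM).map ((gammaPrime S W h).map g) :
        (S.Q.obj M ⟶ B) → (S.Q.obj M ⟶ Z))
        (((cofFL S W hM).map ((gammaPrime S W h).map f) :
          (S.Q.obj M ⟶ A) → (S.Q.obj M ⟶ B)) x) = x ≫ f ≫ g)⟩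
  have hP : P = ⊤ := by
    apply Localization.Construction.morphismProperty_eq_top P
    · intro X Y f x
      rfl
    · intro X Y w hw x
      set y : S.Q.obj M ⟶ S.Q.obj X :=
        ((cofFL S W hM).map ((gammaPrime S W h).map
            (Localization.Construction.wInv w hw)) :
          (S.Q.obj M ⟶ S.Q.obj Y) → (S.Q.obj M ⟶ S.Q.obj X)) x with hy
      have h1 : y ≫ S.Q.map w = x := by
        show ((cofFL S W hM).map ((gammaPrime S W h).map (S.Q.map w)) :
          (S.Q.obj M ⟶ S.Q.obj X) → (S.Q.obj M ⟶ S.Q.obj Y)) y = x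
        rw [hy]
        erw [← Functor.map_comp_apply, ← Functor.map_comp]
        erw [show Localization.Construction.wInv w hw ≫ S.Q.map w =
          𝟙 _ from (Localization.Construction.wIso w hw).inv_hom_id]
        erw [CategoryTheory.Functor.map_id, Functor.map_id_apply]
      show y = x ≫ Localization.Construction.wInv w hw
      rw [← h1, Category.assoc]
      rw [show S.Q.map w ≫ Localization.Construction.wInv w hw =
        𝟙 _ from (Localization.Construction.wIso w hw).hom_inv_id]
      rw [Category.comp_id]
  intro A B g x
  have hg : P g := by rw [hP]; exact MorphismProperty.top_apply g
  exact hg x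

lemma keyBij {M : C} (hM : Cofibrant S W M) (Y : C) :
    Function.Bijective (fun g : S.Q.obj M ⟶ S.Q.obj Y =>
      ((gammaPrime S W h).map g : W.Q.obj M ⟶ W.Q.obj Y)) := by
  rw [Function.bijective_iff_has_inverse]
  refine ⟨fun α => ((cofFL S W hM).map α :
      (S.Q.obj M ⟶ S.Q.obj M) → (S.Q.obj M ⟶ S.Q.obj Y)) (𝟙 _), ?_, ?_⟩
  · intro g
    have := starstar S W h hM g (𝟙 (S.Q.obj M))
    rw [Category.id_comp] at this
    exact this
  · intro α
    have := star S W h hM α (𝟙 (S.Q.obj M))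
    erw [CategoryTheory.Functor.map_id, Category.id_comp] at this
    exact this

end Aux

/-- `(C, S, W)` is a left Cartan-Eilenberg category if and only if
`j : C_cof[S⁻¹, C] ⥤ C[W⁻¹]` is an equivalence of categories. -/
theorem leftCE_iff_j_equivalence (S W : MorphismProperty C) (hsw : StrongWeak S W) :
    LeftCE S W hsw.le_sat ↔ (jFunctor S W hsw.le_sat).IsEquivalence := by
  constructor
  · intro hCE
    haveI : (jFunctor S W hsw.le_sat).Faithful :=
      ⟨fun {A B} {f g} hfg => InducedCategory.hom_ext ((keyBij S W hsw.le_sat A.2 B.1).1 hfg)⟩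
    haveI : (jFunctor S W hsw.le_sat).Full :=
      ⟨fun {A B} α => let ⟨g, hg⟩ := (keyBij S W hsw.le_sat A.2 B.1).2 α
        ⟨InducedCategory.homMk g, hg⟩⟩
    haveI : (jFunctor S W hsw.le_sat).EssSurj := ⟨fun Z => by
      obtain ⟨M, ε, hM, hiso⟩ := hCE Z.as.obj
      exact ⟨⟨M, hM⟩, ⟨@asIso _ _ _ _ ((gammaPrime S W hsw.le_sat).map ε) hiso⟩⟩⟩
    exact ⟨inferInstance, inferInstance, inferInstance⟩
  · intro hj X
    haveI := hj
    haveI := hj.essSurj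
    set A := (jFunctor S W hsw.le_sat).objPreimage (W.Q.obj X) with hA
    set e := (jFunctor S W hsw.le_sat).objObjPreimageIso (W.Q.obj X) with he
    obtain ⟨ε, hε⟩ := (keyBij S W hsw.le_sat A.2 X).2
      (show W.Q.obj A.1 ⟶ W.Q.obj X from e.hom)
    refine ⟨A.1, ε, A.2, ?_⟩
    have : (gammaPrime S W hsw.le_sat).map ε = (show W.Q.obj A.1 ⟶ W.Q.obj X from e.hom) := hε
    rw [this]
    exact Iso.isIso_hom e
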